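/- Let f : ℝ × ℝ → ℝ be continuously differentiable and g : ℝ → ℝ be continuously differentiable. Then for all τ, ξ ∈ ℝ, f(τ, τ+ξ)·g(τ+ξ) − f(τ−ξ, τ)·g(τ) = ξ · (d/dτ) ∫₀¹ f(τ+(η−1)ξ, τ+ηξ)·g(τ+ηξ) dη; that is, the function τ ↦ ∫₀¹ f(τ+(η−1)ξ, τ+ηξ)·g(τ+ηξ) dη is differentiable and ξ times its derivative at τ equals f(τ, τ+ξ)·g(τ+ξ) − f(τ−ξ, τ)·g(τ). -/

import Mathlib

open MeasureTheory

/-- Integral-representation trick used in the proof of the non-local Noether theorem: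
the difference of the integrand at shifted arguments is a total τ-derivative of an
integral over the interpolation parameter η ∈ [0,1]. -/
theorem stmt0 (f : ℝ × ℝ → ℝ) (g : ℝ → ℝ)
    (hf : ContDiff ℝ 1 f) (hg : ContDiff ℝ 1 g) (τ ξ : ℝ) :
    DifferentiableAt ℝ
      (fun t : ℝ => ∫ η in (0:ℝ)..1, f (t + (η - 1) * ξ, t + η * ξ) * g (t + η * ξ)) τ ∧
    ξ * deriv (fun t : ℝ => ∫ η in (0:ℝ)..1, f (t + (η - 1) * ξ, t + η * ξ) * g (t + η * ξ)) τ
      = f (τ, τ + ξ) * g (τ + ξ) - f (τ - ξ, τ) * g τ := by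
  set H : ℝ → ℝ := fun s => f (s - ξ, s) * g s with hHdef
  have hH : ContDiff ℝ 1 H :=
    (hf.comp ((contDiff_id.sub contDiff_const : ContDiff ℝ 1 (fun s : ℝ => s - ξ)).prodMk contDiff_id)).mul hg
  have hHc : Continuous H := hH.continuous
  have hkey : ∀ t η : ℝ, f (t + (η - 1) * ξ, t + η * ξ) * g (t + η * ξ) = H (t + η * ξ) := by
    intro t η
    have h1 : t + (η - 1) * ξ = t + η * ξ - ξ := by ring
    simp only [hHdef, h1]
  have hfun : (fun t : ℝ => ∫ η in (0:ℝ)..1, f (t + (η - 1) * ξ, t + η * ξ) * g (t + η * ξ))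
      = fun t : ℝ => ∫ η in (0:ℝ)..1, H (t + η * ξ) := by
    funext t
    exact intervalIntegral.integral_congr fun η _ => hkey t η
  rw [hfun]
  rcases eq_or_ne ξ 0 with rfl | hξ
  · have h0 : (fun t : ℝ => ∫ η in (0:ℝ)..1, H (t + η * 0)) = fun t => H t := by
      funext t; simp [hHdef]
    rw [h0]
    constructor
    · exact (hH.differentiable one_ne_zero).differentiableAt
    · simp [hHdef]
  · -- ξ ≠ 0
    have hsub : (fun t : ℝ => ∫ η in (0:ℝ)..1, H (t + η * ξ))
        = fun t : ℝ => ξ⁻¹ * ((∫ u in (0:ℝ)..(t + ξ), H u) - ∫ u in (0:ℝ)..t, H u) := by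
      funext t
      have h1 : ∀ η : ℝ, t + η * ξ = ξ * η + t := fun η => by ring
      simp_rw [h1]
      rw [intervalIntegral.integral_comp_mul_add H hξ t]
      rw [intervalIntegral.integral_interval_sub_left
        (hHc.intervalIntegrable 0 (t + ξ)) (hHc.intervalIntegrable 0 t)]
      simp [smul_eq_mul, mul_comm, add_comm]
    rw [hsub]
    have hG : ∀ x : ℝ, HasDerivAt (fun u : ℝ => ∫ s in (0:ℝ)..u, H s) (H x) x := by
      intro x
      exact intervalIntegral.integral_hasDerivAt_right (hHc.intervalIntegrable 0 x)
        (hHc.stronglyMeasurableAtFilter _ _) hHc.continuousAt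
    have hd1 : HasDerivAt (fun t : ℝ => ∫ u in (0:ℝ)..(t + ξ), H u) (H (τ + ξ)) τ := by
      have := (hG (τ + ξ)).comp τ ((hasDerivAt_id τ).add_const ξ)
      simpa [Function.comp_def] using this
    have hd : HasDerivAt
        (fun t : ℝ => ξ⁻¹ * ((∫ u in (0:ℝ)..(t + ξ), H u) - ∫ u in (0:ℝ)..t, H u))
        (ξ⁻¹ * (H (τ + ξ) - H τ)) τ := (hd1.sub (hG τ)).const_mul ξ⁻¹
    refine ⟨hd.differentiableAt, ?_⟩
    rw [hd.deriv, ← mul_assoc, mul_inv_cancel₀ hξ, one_mul]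
    simp [hHdef, add_sub_cancel_right]
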